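/- For any three subspaces U, W, X of a finite-dimensional vector space V, one has dim((U+W) ∩ X) + dim((U ∩ W) ∩ X) ≥ dim(U ∩ X) + dim(W ∩ X). In other words, the function W ↦ dim(W ∩ X) is supermodular on the lattice of subspaces. -/

import Mathlib

/-- For any three subspaces `U, W, X` of a finite-dimensional vector space,
`dim((U+W) ∩ X) + dim(U ∩ W ∩ X) ≥ dim(U ∩ X) + dim(W ∩ X)`:
the function `W ↦ dim(W ∩ X)` is supermodular on the lattice of subspaces. -/
theorem finrank_inf_supermodular
    {K V : Type*} [Field K] [AddCommGroup V] [Module K V] [FiniteDimensional K V]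
    (U W X : Submodule K V) :
    Module.finrank K ↥(U ⊓ X) + Module.finrank K ↥(W ⊓ X) ≤
      Module.finrank K ↥((U ⊔ W) ⊓ X) + Module.finrank K ↥(U ⊓ W ⊓ X) := by
  have h := Submodule.finrank_sup_add_finrank_inf_eq (U ⊓ X) (W ⊓ X)
  rw [← h]
  have h1 : (U ⊓ X) ⊔ (W ⊓ X) ≤ (U ⊔ W) ⊓ X := by
    apply sup_le <;> exact inf_le_inf (by simp) le_rfl
  have h2 : (U ⊓ X) ⊓ (W ⊓ X) = U ⊓ W ⊓ X := by
    rw [inf_inf_inf_comm, inf_idem]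
  rw [h2]
  exact Nat.add_le_add_right (Submodule.finrank_mono h1) _
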